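/- If X is a traceless self-adjoint operator on a multipartite Hilbert space ⊗_{i∈I} H_i such that Tr_J[X] = 0 for some subset J ⊆ I (partial trace over J vanishes), then its Wasserstein-1 norm satisfies ‖X‖_{W₁} ≤ |J| · ‖X‖₁. -/

import Mathlib

open scoped BigOperators Matrix Classical ComplexOrder

noncomputable section

namespace Paper

variable {n : Type*} [Fintype n] [DecidableEq n]

/-- Operator (spectral) norm of a matrix, via the Euclidean operator norm. -/
def opNorm (A : Matrix n n ℂ) : ℝ :=
  ‖LinearMap.toContinuousLinearMap (Matrix.toEuclideanLin A)‖

/-- Functional calculus on Hermitian matrices (returns `0` on non-Hermitian input). -/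
def matFun (f : ℝ → ℝ) (A : Matrix n n ℂ) : Matrix n n ℂ :=
  if h : A.IsHermitian then
    (h.eigenvectorUnitary : Matrix n n ℂ) *
      Matrix.diagonal (fun i => (f (h.eigenvalues i) : ℂ)) *
      (star h.eigenvectorUnitary : Matrix n n ℂ)
  else 0

/-- Matrix logarithm (spectral). -/
def matLog (A : Matrix n n ℂ) : Matrix n n ℂ := matFun Real.log A

/-- Matrix exponential (spectral, for Hermitian matrices). -/
def matExp (A : Matrix n n ℂ) : Matrix n n ℂ := matFun Real.exp A

/-- Trace norm (of a Hermitian matrix: the sum of absolute values of eigenvalues). -/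
def traceNorm (A : Matrix n n ℂ) : ℝ :=
  if h : A.IsHermitian then ∑ i, |h.eigenvalues i| else 0

/-- Umegaki relative entropy `D(ρ‖σ) = Tr[ρ(log ρ − log σ)]`. -/
def relEnt (ρ σ : Matrix n n ℂ) : ℝ :=
  (Matrix.trace (ρ * (matLog ρ - matLog σ))).re

/-- von Neumann entropy. -/
def vnEnt (ρ : Matrix n n ℂ) : ℝ := -(Matrix.trace (ρ * matLog ρ)).re

/-- A quantum state: positive semidefinite with unit trace. -/
def IsState (ρ : Matrix n n ℂ) : Prop := ρ.PosSemidef ∧ ρ.trace = 1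

/-- Entropy production of a generator `L` with respect to the reference state `σ`. -/
def entProd (L : Matrix n n ℂ → Matrix n n ℂ) (σ ρ : Matrix n n ℂ) : ℝ :=
  -(Matrix.trace (L ρ * (matLog ρ - matLog σ))).re

end Paper
namespace Paper

variable {ι : Type*} [Fintype ι] [DecidableEq ι] {d : ι → Type*}
  [∀ i, Fintype (d i)] [∀ i, DecidableEq (d i)]

/-- Embedding `Id_i ⊗ H̃` of an operator `H̃` on the complement of the site `i` into the full
multipartite space. -/
def embedAt (i : ι) (M : Matrix (∀ j : {j : ι // j ≠ i}, d j.1) (∀ j : {j : ι // j ≠ i}, d j.1) ℂ) :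
    Matrix (∀ j, d j) (∀ j, d j) ℂ :=
  fun x y => if x i = y i then M (fun j => x j.1) (fun j => y j.1) else 0

/-- The Lipschitz norm `‖H‖_L = 2 maxᵢ min_{H̃} ‖H − Id_i ⊗ H̃‖_∞` on a multipartite space. -/
def lipNorm (H : Matrix (∀ j, d j) (∀ j, d j) ℂ) : ℝ :=
  2 * ⨆ i : ι, ⨅ M : Matrix (∀ j : {j : ι // j ≠ i}, d j.1) (∀ j : {j : ι // j ≠ i}, d j.1) ℂ,
    opNorm (H - embedAt i M)

/-- The quantum Wasserstein norm of order 1: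
`‖X‖_{W₁} = max{Tr[H X] : H self-adjoint, ‖H‖_L ≤ 1}`. -/
def w1Norm (X : Matrix (∀ j, d j) (∀ j, d j) ℂ) : ℝ :=
  sSup {r : ℝ | ∃ H : Matrix (∀ j, d j) (∀ j, d j) ℂ,
    H.IsHermitian ∧ lipNorm H ≤ 1 ∧ r = (Matrix.trace (H * X)).re}

/-- Partial trace over the sites in `J`, giving an operator on the complementary sites. -/
def ptraceSet (J : Finset ι) (X : Matrix (∀ j, d j) (∀ j, d j) ℂ) :
    Matrix (∀ j : {j : ι // j ∉ J}, d j.1) (∀ j : {j : ι // j ∉ J}, d j.1) ℂ :=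
  fun x y => ∑ z : ∀ j : {j : ι // j ∈ J}, d j.1,
    X (fun j => if h : j ∈ J then z ⟨j, h⟩ else x ⟨j, h⟩)
      (fun j => if h : j ∈ J then z ⟨j, h⟩ else y ⟨j, h⟩)

end Paper
namespace Paper

section AuxGeneral
variable {n : Type*} [Fintype n] [DecidableEq n]

lemma opNorm_nonneg (A : Matrix n n ℂ) : 0 ≤ opNorm A := norm_nonneg _

lemma traceNorm_nonneg (A : Matrix n n ℂ) : 0 ≤ traceNorm A := by
  unfold traceNorm; split_ifs
  · exact Finset.sum_nonneg fun i _ => abs_nonneg _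
  · exact le_refl 0

lemma le_opNorm (A : Matrix n n ℂ) (v : EuclideanSpace ℂ n) :
    ‖Matrix.toEuclideanLin A v‖ ≤ opNorm A * ‖v‖ :=
  (LinearMap.toContinuousLinearMap (Matrix.toEuclideanLin A)).le_opNorm v

lemma opNorm_le_bound (A : Matrix n n ℂ) {C : ℝ} (hC : 0 ≤ C)
    (h : ∀ v : EuclideanSpace ℂ n, ‖Matrix.toEuclideanLin A v‖ ≤ C * ‖v‖) : opNorm A ≤ C :=
  ContinuousLinearMap.opNorm_le_bound _ hC h

lemma opNorm_zero : opNorm (0 : Matrix n n ℂ) = 0 := by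
  unfold opNorm; rw [map_zero, map_zero, norm_zero]

lemma opNorm_add_le (A B : Matrix n n ℂ) : opNorm (A + B) ≤ opNorm A + opNorm B := by
  unfold opNorm; rw [map_add, map_add]; exact norm_add_le _ _

lemma opNorm_neg (A : Matrix n n ℂ) : opNorm (-A) = opNorm A := by
  unfold opNorm; rw [map_neg, map_neg, norm_neg]

lemma opNorm_sub_le (A B : Matrix n n ℂ) : opNorm (A - B) ≤ opNorm A + opNorm B := by
  rw [sub_eq_add_neg]
  exact (opNorm_add_le A (-B)).trans (by rw [opNorm_neg])

lemma euclid_norm_sq (x : EuclideanSpace ℂ n) : ‖x‖ ^ 2 = ∑ i, ‖x i‖ ^ 2 := by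
  rw [EuclideanSpace.norm_eq, Real.sq_sqrt]
  exact Finset.sum_nonneg fun i _ => sq_nonneg _

lemma toEuclideanLin_apply' (A : Matrix n n ℂ) (v : EuclideanSpace ℂ n) (i : n) :
    Matrix.toEuclideanLin A v i = ∑ j, A i j * v j := rfl

lemma quad_le (A : Matrix n n ℂ) (U : Matrix n n ℂ) (hU : star U * U = 1) (i : n) :
    ‖(star U * A * U) i i‖ ≤ opNorm A := by
  set v : EuclideanSpace ℂ n := (WithLp.equiv 2 (n → ℂ)).symm (fun p => U p i) with hv
  have hnorm : ‖v‖ = 1 := by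
    have h1 : ∑ p, ‖U p i‖ ^ 2 = 1 := by
      have h2 : (star U * U) i i = (1 : ℂ) := by rw [hU]; simp [Matrix.one_apply]
      have h3 : (star U * U) i i = ((∑ p, ‖U p i‖ ^ 2 : ℝ) : ℂ) := by
        simp only [Matrix.mul_apply, Matrix.star_apply, RCLike.star_def, RCLike.conj_mul]
        push_cast; rfl
      rw [h3] at h2
      exact_mod_cast h2
    rw [EuclideanSpace.norm_eq]
    simp only [hv, WithLp.equiv_symm_apply, PiLp.toLp_apply]
    rw [h1, Real.sqrt_one]
  have h2 : (star U * A * U) i i = @inner ℂ _ _ v (Matrix.toEuclideanLin A v) := by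
    simp only [Matrix.toEuclideanLin_apply, PiLp.inner_apply, RCLike.inner_apply,
      WithLp.equiv_symm_apply, PiLp.toLp_apply, Matrix.mulVec, dotProduct,
      Matrix.mul_apply, Matrix.star_apply, RCLike.star_def, hv]
    show ∑ j, (∑ k, starRingEnd ℂ (U k i) * A k j) * U j i
      = ∑ x, (∑ y, A x y * U y i) * starRingEnd ℂ (U x i)
    simp_rw [Finset.sum_mul]
    rw [Finset.sum_comm]
    exact Finset.sum_congr rfl fun a _ => Finset.sum_congr rfl fun b _ => by ring
  rw [h2]
  calc ‖@inner ℂ _ _ v (Matrix.toEuclideanLin A v)‖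
      ≤ ‖v‖ * ‖Matrix.toEuclideanLin A v‖ := norm_inner_le_norm _ _
    _ ≤ ‖v‖ * (opNorm A * ‖v‖) := by
        exact mul_le_mul_of_nonneg_left (le_opNorm A v) (norm_nonneg v)
    _ = opNorm A := by rw [hnorm]; ring

lemma abs_re_trace_mul_le (A X : Matrix n n ℂ) (hX : X.IsHermitian) :
    |(Matrix.trace (A * X)).re| ≤ opNorm A * traceNorm X := by
  set U : Matrix n n ℂ := (hX.eigenvectorUnitary : Matrix n n ℂ) with hUdef
  have hU : star U * U = 1 := Unitary.coe_star_mul_self hX.eigenvectorUnitary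
  have htr : Matrix.trace (A * X)
      = ∑ i, (star U * A * U) i i * ((hX.eigenvalues i : ℝ) : ℂ) := by
    conv_lhs => rw [hX.spectral_theorem, Unitary.conjStarAlgAut_apply]
    rw [← Matrix.mul_assoc, ← Matrix.mul_assoc, Matrix.trace_mul_cycle,
      ← Matrix.mul_assoc]
    simp [Matrix.trace, Matrix.diag, Matrix.mul_diagonal, Function.comp, hUdef]
  rw [htr]
  calc |(∑ i, (star U * A * U) i i * ((hX.eigenvalues i : ℝ) : ℂ)).re|
      ≤ ‖∑ i, (star U * A * U) i i * ((hX.eigenvalues i : ℝ) : ℂ)‖ := Complex.abs_re_le_norm _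
    _ ≤ ∑ i, ‖(star U * A * U) i i * ((hX.eigenvalues i : ℝ) : ℂ)‖ := norm_sum_le _ _
    _ ≤ ∑ i, opNorm A * |hX.eigenvalues i| := by
        refine Finset.sum_le_sum fun i _ => ?_
        rw [norm_mul, Complex.norm_real, Real.norm_eq_abs]
        exact mul_le_mul_of_nonneg_right (quad_le A U hU i) (abs_nonneg _)
    _ = opNorm A * traceNorm X := by
        rw [← Finset.mul_sum, traceNorm, dif_pos hX]

lemma opNorm_reindex_le {m : Type*} [Fintype m] [DecidableEq m] (e : m ≃ n)
    (A : Matrix m m ℂ) : opNorm (Matrix.reindex e e A) ≤ opNorm A := by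
  apply opNorm_le_bound _ (opNorm_nonneg A)
  intro v
  set w : EuclideanSpace ℂ m := (WithLp.equiv 2 (m → ℂ)).symm (fun i => v (e i)) with hw
  have happ : ∀ i' : n, Matrix.toEuclideanLin (Matrix.reindex e e A) v i'
      = Matrix.toEuclideanLin A w (e.symm i') := by
    intro i'
    rw [toEuclideanLin_apply', toEuclideanLin_apply']
    simp only [Matrix.reindex_apply, Matrix.submatrix_apply, hw, WithLp.equiv_symm_apply, PiLp.toLp_apply]
    exact Fintype.sum_equiv e.symm _ _ (fun j' => by rw [Equiv.apply_symm_apply])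
  have h1 : ‖Matrix.toEuclideanLin (Matrix.reindex e e A) v‖ = ‖Matrix.toEuclideanLin A w‖ := by
    rw [EuclideanSpace.norm_eq, EuclideanSpace.norm_eq]
    congr 1
    exact Fintype.sum_equiv e.symm _ _ (fun i' => by rw [happ i'])
  have h2 : ‖w‖ = ‖v‖ := by
    rw [EuclideanSpace.norm_eq, EuclideanSpace.norm_eq]
    congr 1
    exact Fintype.sum_equiv e _ _ (fun i => by simp [hw, WithLp.equiv_symm_apply, PiLp.toLp_apply])
  rw [h1, ← h2]
  exact le_opNorm A w

lemma opNorm_reindex {m : Type*} [Fintype m] [DecidableEq m] (e : m ≃ n)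
    (A : Matrix m m ℂ) : opNorm (Matrix.reindex e e A) = opNorm A := by
  refine le_antisymm (opNorm_reindex_le e A) ?_
  have h := opNorm_reindex_le e.symm (Matrix.reindex e e A)
  have h2 : Matrix.reindex e.symm e.symm (Matrix.reindex e e A) = A := by
    apply Matrix.ext; intro i j
    simp [Matrix.reindex_apply, Matrix.submatrix_apply]
  rwa [h2] at h

end AuxGeneral

section Bipartite
variable {α β : Type*} [Fintype α] [DecidableEq α] [Fintype β] [DecidableEq β]

def bcond (A : Matrix (α × β) (α × β) ℂ) : Matrix (α × β) (α × β) ℂ :=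
  fun p q => if p.1 = q.1 then (Fintype.card α : ℂ)⁻¹ * ∑ z : α, A (z, p.2) (z, q.2) else 0

lemma bcond_opNorm [Nonempty α] (A : Matrix (α × β) (α × β) ℂ) :
    opNorm (bcond A) ≤ opNorm A := by
  apply opNorm_le_bound _ (opNorm_nonneg A)
  intro v
  set c : ℝ := (Fintype.card α : ℝ) with hcdef
  have hc : 0 < c := by
    simpa [hcdef] using Fintype.card_pos (α := α)
  set u : α → α → EuclideanSpace ℂ (α × β) :=
    fun a z => (WithLp.equiv 2 ((α × β) → ℂ)).symm
      (fun p => if p.1 = z then v (a, p.2) else 0) with hu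
  have hentry : ∀ a b, Matrix.toEuclideanLin (bcond A) v (a, b)
      = (c : ℂ)⁻¹ * ∑ z, Matrix.toEuclideanLin A (u a z) (z, b) := by
    intro a b
    rw [toEuclideanLin_apply']
    simp only [bcond, Fintype.sum_prod_type]
    rw [Finset.sum_comm]
    have collapse : ∀ b' : β, (∑ a' : α, (if a = a' then
        (Fintype.card α : ℂ)⁻¹ * ∑ z : α, A (z, b) (z, b') else 0) * v (a', b'))
        = (Fintype.card α : ℂ)⁻¹ * ∑ z : α, A (z, b) (z, b') * v (a, b') := by
      intro b'
      simp only [ite_mul, zero_mul]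
      rw [Finset.sum_ite_eq]
      simp only [Finset.mem_univ, if_true, Finset.mul_sum, Finset.sum_mul]
      exact Finset.sum_congr rfl fun z _ => mul_assoc _ _ _
    rw [Finset.sum_congr rfl fun b' _ => collapse b']
    rw [← Finset.mul_sum]
    congr 1
    rw [Finset.sum_comm]
    refine Finset.sum_congr rfl fun z _ => ?_
    rw [toEuclideanLin_apply']
    simp only [hu, WithLp.equiv_symm_apply, PiLp.toLp_apply, Fintype.sum_prod_type, mul_ite, mul_zero]
    rw [Finset.sum_comm]
    simp [Finset.sum_ite_eq']
  have husq : ∀ a z, ‖u a z‖ ^ 2 = ∑ q, ‖v (a, q)‖ ^ 2 := by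
    intro a z
    rw [euclid_norm_sq]
    simp only [hu, WithLp.equiv_symm_apply, PiLp.toLp_apply, Fintype.sum_prod_type]
    rw [Finset.sum_comm]
    have : ∀ q : β, (∑ p : α, ‖if p = z then v (a, q) else 0‖ ^ 2) = ‖v (a, q)‖ ^ 2 := by
      intro q
      have : ∀ p : α, ‖if p = z then v (a, q) else 0‖ ^ 2
          = if p = z then ‖v (a, q)‖ ^ 2 else 0 := by
        intro p; split_ifs <;> simp
      rw [Finset.sum_congr rfl fun p _ => this p, Finset.sum_ite_eq']
      simp
    exact Finset.sum_congr rfl fun q _ => this q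
  have key : ∀ a b, ‖Matrix.toEuclideanLin (bcond A) v (a, b)‖ ^ 2
      ≤ c⁻¹ * ∑ z, ‖Matrix.toEuclideanLin A (u a z) (z, b)‖ ^ 2 := by
    intro a b
    rw [hentry a b]
    have h1 : ‖(c : ℂ)⁻¹ * ∑ z, Matrix.toEuclideanLin A (u a z) (z, b)‖
        ≤ c⁻¹ * ∑ z, ‖Matrix.toEuclideanLin A (u a z) (z, b)‖ := by
      rw [norm_mul]
      have : ‖((c : ℝ) : ℂ)⁻¹‖ = c⁻¹ := by
        rw [norm_inv, Complex.norm_real, Real.norm_eq_abs, abs_of_pos hc]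
      rw [this]
      exact mul_le_mul_of_nonneg_left (norm_sum_le _ _) (by positivity)
    have h2 : (c⁻¹ * ∑ z, ‖Matrix.toEuclideanLin A (u a z) (z, b)‖) ^ 2
        ≤ c⁻¹ * ∑ z, ‖Matrix.toEuclideanLin A (u a z) (z, b)‖ ^ 2 := by
      rw [mul_pow]
      have h3 : (∑ z, ‖Matrix.toEuclideanLin A (u a z) (z, b)‖) ^ 2
          ≤ c * ∑ z, ‖Matrix.toEuclideanLin A (u a z) (z, b)‖ ^ 2 := by
        simpa [hcdef] using sq_sum_le_card_mul_sum_sq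
          (s := (Finset.univ : Finset α))
          (f := fun z => ‖Matrix.toEuclideanLin A (u a z) (z, b)‖)
      calc (c⁻¹) ^ 2 * (∑ z, ‖Matrix.toEuclideanLin A (u a z) (z, b)‖) ^ 2
          ≤ (c⁻¹) ^ 2 * (c * ∑ z, ‖Matrix.toEuclideanLin A (u a z) (z, b)‖ ^ 2) := by
            exact mul_le_mul_of_nonneg_left h3 (by positivity)
        _ = c⁻¹ * (c⁻¹ * c) * ∑ z, ‖Matrix.toEuclideanLin A (u a z) (z, b)‖ ^ 2 := by ring
        _ = c⁻¹ * ∑ z, ‖Matrix.toEuclideanLin A (u a z) (z, b)‖ ^ 2 := by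
            rw [inv_mul_cancel₀ (ne_of_gt hc), mul_one]
    calc ‖(c : ℂ)⁻¹ * ∑ z, Matrix.toEuclideanLin A (u a z) (z, b)‖ ^ 2
        ≤ (c⁻¹ * ∑ z, ‖Matrix.toEuclideanLin A (u a z) (z, b)‖) ^ 2 := by
          apply pow_le_pow_left₀ (norm_nonneg _) h1
      _ ≤ c⁻¹ * ∑ z, ‖Matrix.toEuclideanLin A (u a z) (z, b)‖ ^ 2 := h2
  have key2 : ∀ a z, (∑ b, ‖Matrix.toEuclideanLin A (u a z) (z, b)‖ ^ 2)
      ≤ opNorm A ^ 2 * ∑ q, ‖v (a, q)‖ ^ 2 := by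
    intro a z
    have h1 : (∑ b, ‖Matrix.toEuclideanLin A (u a z) (z, b)‖ ^ 2)
        ≤ ∑ p, ∑ q, ‖Matrix.toEuclideanLin A (u a z) (p, q)‖ ^ 2 := by
      exact Finset.single_le_sum (f := fun p => ∑ q, ‖Matrix.toEuclideanLin A (u a z) (p, q)‖ ^ 2)
        (fun p _ => Finset.sum_nonneg fun q _ => sq_nonneg _) (Finset.mem_univ z)
    have h2 : (∑ p, ∑ q, ‖Matrix.toEuclideanLin A (u a z) (p, q)‖ ^ 2)
        = ‖Matrix.toEuclideanLin A (u a z)‖ ^ 2 := by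
      rw [euclid_norm_sq, Fintype.sum_prod_type]
    have h3 : ‖Matrix.toEuclideanLin A (u a z)‖ ^ 2 ≤ (opNorm A * ‖u a z‖) ^ 2 := by
      apply pow_le_pow_left₀ (norm_nonneg _) (le_opNorm A (u a z))
    calc (∑ b, ‖Matrix.toEuclideanLin A (u a z) (z, b)‖ ^ 2)
        ≤ ‖Matrix.toEuclideanLin A (u a z)‖ ^ 2 := h2 ▸ h1
      _ ≤ (opNorm A * ‖u a z‖) ^ 2 := h3
      _ = opNorm A ^ 2 * ∑ q, ‖v (a, q)‖ ^ 2 := by rw [mul_pow, husq a z]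
  have total : ‖Matrix.toEuclideanLin (bcond A) v‖ ^ 2 ≤ (opNorm A * ‖v‖) ^ 2 := by
    rw [euclid_norm_sq, Fintype.sum_prod_type]
    calc (∑ a, ∑ b, ‖Matrix.toEuclideanLin (bcond A) v (a, b)‖ ^ 2)
        ≤ ∑ a, ∑ b, c⁻¹ * ∑ z, ‖Matrix.toEuclideanLin A (u a z) (z, b)‖ ^ 2 := by
          exact Finset.sum_le_sum fun a _ => Finset.sum_le_sum fun b _ => key a b
      _ = c⁻¹ * ∑ a, ∑ z, ∑ b, ‖Matrix.toEuclideanLin A (u a z) (z, b)‖ ^ 2 := by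
          rw [Finset.mul_sum]
          refine Finset.sum_congr rfl fun a _ => ?_
          rw [← Finset.mul_sum]
          congr 1
          rw [Finset.sum_comm]
      _ ≤ c⁻¹ * ∑ a, ∑ _z : α, opNorm A ^ 2 * ∑ q, ‖v (a, q)‖ ^ 2 := by
          refine mul_le_mul_of_nonneg_left ?_ (inv_nonneg.mpr hc.le)
          exact Finset.sum_le_sum fun a _ => Finset.sum_le_sum fun z _ => key2 a z
      _ = (opNorm A * ‖v‖) ^ 2 := by
          simp only [Finset.sum_const, Finset.card_univ, nsmul_eq_mul]
          rw [← Finset.mul_sum, ← Finset.mul_sum, mul_pow, euclid_norm_sq,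
            Fintype.sum_prod_type, ← hcdef]
          rw [← mul_assoc, inv_mul_cancel₀ (ne_of_gt hc), one_mul]
  calc ‖Matrix.toEuclideanLin (bcond A) v‖
      = Real.sqrt (‖Matrix.toEuclideanLin (bcond A) v‖ ^ 2) := by
        rw [Real.sqrt_sq (norm_nonneg _)]
    _ ≤ Real.sqrt ((opNorm A * ‖v‖) ^ 2) := Real.sqrt_le_sqrt total
    _ = opNorm A * ‖v‖ := Real.sqrt_sq (mul_nonneg (opNorm_nonneg A) (norm_nonneg v))

lemma bcond_trace_zero (M Y : Matrix (α × β) (α × β) ℂ)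
    (h : ∀ b b' : β, ∑ a : α, Y (a, b') (a, b) = 0) :
    ∑ p : α × β, ∑ q : α × β, bcond M p q * Y q p = 0 := by
  calc ∑ p : α × β, ∑ q : α × β, bcond M p q * Y q p
      = ∑ a, ∑ b, ∑ q : α × β, bcond M (a, b) q * Y q (a, b) := by
        exact Fintype.sum_prod_type (f := fun p : α × β => ∑ q : α × β, bcond M p q * Y q p)
    _ = ∑ a, ∑ b, ∑ a', ∑ b', bcond M (a, b) (a', b') * Y (a', b') (a, b) := by
        refine Finset.sum_congr rfl fun a _ => Finset.sum_congr rfl fun b _ => ?_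
        exact Fintype.sum_prod_type (f := fun q : α × β => bcond M (a, b) q * Y q (a, b))
    _ = ∑ a, ∑ b, ∑ b', (Fintype.card α : ℂ)⁻¹ * (∑ z, M (z, b) (z, b')) * Y (a, b') (a, b) := by
        refine Finset.sum_congr rfl fun a _ => Finset.sum_congr rfl fun b _ => ?_
        rw [Finset.sum_comm]
        refine Finset.sum_congr rfl fun b' _ => ?_
        simp only [bcond, ite_mul, zero_mul]
        rw [Finset.sum_ite_eq]
        simp
    _ = ∑ b, ∑ b', (Fintype.card α : ℂ)⁻¹ * (∑ z, M (z, b) (z, b')) * ∑ a, Y (a, b') (a, b) := by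
        rw [Finset.sum_comm]
        refine Finset.sum_congr rfl fun b _ => ?_
        rw [Finset.sum_comm]
        refine Finset.sum_congr rfl fun b' _ => ?_
        rw [← Finset.mul_sum]
    _ = 0 := by
        refine Finset.sum_eq_zero fun b _ => Finset.sum_eq_zero fun b' _ => ?_
        rw [h b b', mul_zero]

end Bipartite

section Multipartite
variable {ι : Type*} [Fintype ι] [DecidableEq ι] {d : ι → Type*}
  [∀ i, Fintype (d i)] [∀ i, DecidableEq (d i)]

def merge (S : Finset ι) (z x : ∀ j, d j) : ∀ j, d j := fun j => if j ∈ S then z j else x j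

def condExp (S : Finset ι) (A : Matrix (∀ j, d j) (∀ j, d j) ℂ) :
    Matrix (∀ j, d j) (∀ j, d j) ℂ :=
  fun x y => if ∀ i ∈ S, x i = y i then
    (Fintype.card (∀ j, d j) : ℂ)⁻¹ * ∑ z : ∀ j, d j, A (merge S z x) (merge S z y) else 0

lemma sum_merge (S : Finset ι) (f : (∀ j, d j) → ℂ) :
    ∑ z : ∀ j, d j, ∑ w : ∀ j, d j, f (merge S w z)
      = (Fintype.card (∀ j, d j) : ℂ) * ∑ u, f u := by
  have hinv : Function.Involutive
      (fun p : (∀ j, d j) × (∀ j, d j) => (merge S p.2 p.1, merge S p.1 p.2)) := by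
    rintro ⟨z, w⟩
    simp only [Prod.mk.injEq]
    constructor <;> (funext j; simp only [merge]; split_ifs with h <;> simp [h])
  calc ∑ z : ∀ j, d j, ∑ w : ∀ j, d j, f (merge S w z)
      = ∑ p : (∀ j, d j) × (∀ j, d j), f (merge S p.2 p.1) := by
        exact (Fintype.sum_prod_type (f := fun p : (∀ j, d j) × (∀ j, d j) =>
          f (merge S p.2 p.1))).symm
    _ = ∑ p : (∀ j, d j) × (∀ j, d j), f p.1 := Equiv.sum_comp hinv.toPerm (fun p => f p.1)
    _ = ∑ z : ∀ j, d j, ∑ _w : ∀ j, d j, f z := by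
        exact Fintype.sum_prod_type (f := fun p : (∀ j, d j) × (∀ j, d j) => f p.1)
    _ = (Fintype.card (∀ j, d j) : ℂ) * ∑ u, f u := by
        simp [Finset.sum_const, Finset.card_univ, Finset.mul_sum]

variable [Nonempty (∀ j, d j)]

lemma cardne : (Fintype.card (∀ j, d j) : ℂ) ≠ 0 := by
  exact_mod_cast Fintype.card_ne_zero (α := ∀ j, d j)

lemma condExp_empty (A : Matrix (∀ j, d j) (∀ j, d j) ℂ) : condExp ∅ A = A := by
  funext x y
  have hm : ∀ z, merge (∅ : Finset ι) z x = x := by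
    intro z; funext j; simp [merge]
  have hm' : ∀ z, merge (∅ : Finset ι) z y = y := by
    intro z; funext j; simp [merge]
  simp only [condExp, Finset.notMem_empty, false_implies, implies_true, if_true]
  simp only [hm, hm', Finset.sum_const, Finset.card_univ, nsmul_eq_mul]
  rw [← mul_assoc, inv_mul_cancel₀ cardne, one_mul]

lemma condExp_sub (S : Finset ι) (A B : Matrix (∀ j, d j) (∀ j, d j) ℂ) :
    condExp S (A - B) = condExp S A - condExp S B := by
  funext x y
  simp only [condExp, Matrix.sub_apply]
  split_ifs with h
  · rw [Finset.sum_sub_distrib, mul_sub]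
  · simp

lemma condExp_union {S T : Finset ι} (h : Disjoint S T)
    (A : Matrix (∀ j, d j) (∀ j, d j) ℂ) :
    condExp S (condExp T A) = condExp (S ∪ T) A := by
  funext x y
  by_cases hS : ∀ i ∈ S, x i = y i
  · by_cases hT : ∀ i ∈ T, x i = y i
    · have hST : ∀ i ∈ S ∪ T, x i = y i := fun i hi =>
        (Finset.mem_union.mp hi).elim (hS i) (hT i)
      show condExp S (condExp T A) x y = condExp (S ∪ T) A x y
      rw [condExp, if_pos hS, condExp, if_pos hST]
      have hTz : ∀ z, ∀ i ∈ T, merge S z x i = merge S z y i := by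
        intro z i hi
        simp only [merge]
        split_ifs with h'
        · rfl
        · exact hT i hi
      have step : ∀ z, condExp T A (merge S z x) (merge S z y)
          = (Fintype.card (∀ j, d j) : ℂ)⁻¹ *
            ∑ w, A (merge (S ∪ T) (merge T w z) x) (merge (S ∪ T) (merge T w z) y) := by
        intro z
        rw [condExp, if_pos (hTz z)]
        congr 1
        refine Finset.sum_congr rfl fun w _ => ?_
        have hm1 : merge T w (merge S z x) = merge (S ∪ T) (merge T w z) x := by
          funext j
          by_cases hjT : j ∈ T
          · simp [merge, hjT]
          · by_cases hjS : j ∈ S <;> simp [merge, hjT, hjS]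
        have hm2 : merge T w (merge S z y) = merge (S ∪ T) (merge T w z) y := by
          funext j
          by_cases hjT : j ∈ T
          · simp [merge, hjT]
          · by_cases hjS : j ∈ S <;> simp [merge, hjT, hjS]
        rw [hm1, hm2]
      rw [Finset.sum_congr rfl fun z _ => step z, ← Finset.mul_sum]
      rw [sum_merge T (fun u => A (merge (S ∪ T) u x) (merge (S ∪ T) u y))]
      have hco : (Fintype.card (∀ j, d j) : ℂ)⁻¹ * (Fintype.card (∀ j, d j) : ℂ)⁻¹ *
          (Fintype.card (∀ j, d j) : ℂ) = (Fintype.card (∀ j, d j) : ℂ)⁻¹ := by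
        field_simp
      rw [← mul_assoc, ← mul_assoc, hco]
    · have hST' : ¬ ∀ i ∈ S ∪ T, x i = y i := by
        intro hall; exact hT fun i hi => hall i (Finset.mem_union_right S hi)
      push_neg at hT
      obtain ⟨i, hiT, hne⟩ := hT
      have hiS : i ∉ S := Finset.disjoint_right.mp h hiT
      show condExp S (condExp T A) x y = condExp (S ∪ T) A x y
      rw [condExp, if_pos hS, condExp, if_neg hST']
      have hz : ∀ z, condExp T A (merge S z x) (merge S z y) = 0 := by
        intro z
        rw [condExp, if_neg]
        push_neg
        exact ⟨i, hiT, by simp [merge, hiS, hne]⟩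
      simp [hz]
  · have hST' : ¬ ∀ i ∈ S ∪ T, x i = y i := by
      intro hall; exact hS fun i hi => hall i (Finset.mem_union_left T hi)
    show condExp S (condExp T A) x y = condExp (S ∪ T) A x y
    rw [condExp, if_neg hS, condExp, if_neg hST']

lemma condExp_embedAt (i : ι)
    (M : Matrix (∀ j : {j : ι // j ≠ i}, d j.1) (∀ j : {j : ι // j ≠ i}, d j.1) ℂ) :
    condExp {i} (embedAt i M) = embedAt i M := by
  funext x y
  show condExp {i} (embedAt i M) x y = embedAt i M x y
  rw [condExp, embedAt]
  by_cases hxy : x i = y i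
  · have hcond : ∀ j ∈ ({i} : Finset ι), x j = y j := by
      intro j hj; rw [Finset.mem_singleton] at hj; rw [hj]; exact hxy
    rw [if_pos hcond, if_pos hxy]
    have hterm : ∀ z, embedAt i M (merge {i} z x) (merge {i} z y)
        = M (fun j => x j.1) (fun j => y j.1) := by
      intro z
      rw [embedAt]
      have h1 : merge {i} z x i = merge {i} z y i := by simp [merge]
      rw [if_pos h1]
      have h2 : (fun j : {j : ι // j ≠ i} => merge {i} z x j.1)
          = fun j : {j : ι // j ≠ i} => x j.1 := by
        funext j
        obtain ⟨j, hj⟩ := j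
        simp [merge, Finset.mem_singleton, hj]
      have h3 : (fun j : {j : ι // j ≠ i} => merge {i} z y j.1)
          = fun j : {j : ι // j ≠ i} => y j.1 := by
        funext j
        obtain ⟨j, hj⟩ := j
        simp [merge, Finset.mem_singleton, hj]
      rw [h2, h3]
    rw [Finset.sum_congr rfl fun z _ => hterm z, Finset.sum_const, Finset.card_univ,
      nsmul_eq_mul, ← mul_assoc, inv_mul_cancel₀ cardne, one_mul]
  · have hcond : ¬ ∀ j ∈ ({i} : Finset ι), x j = y j := by
      intro hall; exact hxy (hall i (Finset.mem_singleton_self i))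
    rw [if_neg hcond, if_neg hxy]

lemma reindex_condExp (S : Finset ι) (A : Matrix (∀ j, d j) (∀ j, d j) ℂ) :
    Matrix.reindex (Equiv.piEquivPiSubtypeProd (fun j => j ∈ S) d)
        (Equiv.piEquivPiSubtypeProd (fun j => j ∈ S) d) (condExp S A)
      = bcond (Matrix.reindex (Equiv.piEquivPiSubtypeProd (fun j => j ∈ S) d)
          (Equiv.piEquivPiSubtypeProd (fun j => j ∈ S) d) A) := by
  set e := Equiv.piEquivPiSubtypeProd (fun j => j ∈ S) d with he
  haveI hβ : Nonempty (∀ i : {j : ι // ¬ j ∈ S}, d i.1) :=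
    ⟨fun i => Classical.arbitrary (∀ j, d j) i.1⟩
  apply Matrix.ext
  rintro ⟨a, b⟩ ⟨a', b'⟩
  simp only [Matrix.reindex_apply, Matrix.submatrix_apply, bcond]
  rw [condExp]
  have f1 : (∀ i ∈ S, e.symm (a, b) i = e.symm (a', b') i) ↔ a = a' := by
    constructor
    · intro hcond
      funext i
      have h := hcond i.1 i.2
      simpa [he, Equiv.piEquivPiSubtypeProd, i.2] using h
    · rintro rfl i hi
      simp [he, Equiv.piEquivPiSubtypeProd, hi]
  by_cases haa : a = a'
  · rw [if_pos (f1.mpr haa), if_pos haa]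
    have f2 : ∀ (z : ∀ j, d j) (bb : ∀ i : {j : ι // ¬ j ∈ S}, d i.1),
        merge S z (e.symm (a, bb)) = e.symm (fun i : {j : ι // j ∈ S} => z i.1, bb) := by
      intro z bb; funext j
      by_cases hj : j ∈ S <;> simp [merge, he, Equiv.piEquivPiSubtypeProd, hj]
    have f2' : ∀ (z : ∀ j, d j),
        merge S z (e.symm (a', b')) = e.symm (fun i : {j : ι // j ∈ S} => z i.1, b') := by
      intro z; funext j
      by_cases hj : j ∈ S <;> simp [merge, he, Equiv.piEquivPiSubtypeProd, hj]
    rw [Finset.sum_congr rfl fun z _ => by rw [f2 z b, f2' z]]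
    have f3 : ∑ z : ∀ j, d j, A (e.symm (fun i : {j : ι // j ∈ S} => z i.1, b))
          (e.symm (fun i : {j : ι // j ∈ S} => z i.1, b'))
        = (Fintype.card (∀ i : {j : ι // ¬ j ∈ S}, d i.1) : ℂ) *
          ∑ w : ∀ i : {j : ι // j ∈ S}, d i.1, A (e.symm (w, b)) (e.symm (w, b')) := by
      have hstep : ∑ z : ∀ j, d j, A (e.symm (fun i : {j : ι // j ∈ S} => z i.1, b))
            (e.symm (fun i : {j : ι // j ∈ S} => z i.1, b'))
          = ∑ p : (∀ i : {j : ι // j ∈ S}, d i.1) × (∀ i : {j : ι // ¬ j ∈ S}, d i.1),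
              A (e.symm (p.1, b)) (e.symm (p.1, b')) := by
        refine Fintype.sum_equiv e _ _ fun z => ?_
        simp [he, Equiv.piEquivPiSubtypeProd]
      rw [hstep]
      rw [Fintype.sum_prod_type (f := fun p : (∀ i : {j : ι // j ∈ S}, d i.1) ×
        (∀ i : {j : ι // ¬ j ∈ S}, d i.1) => A (e.symm (p.1, b)) (e.symm (p.1, b')))]
      simp only [Finset.sum_const, Finset.card_univ, nsmul_eq_mul, Finset.mul_sum]
    rw [f3]
    have f4 : (Fintype.card (∀ j, d j) : ℂ)
        = (Fintype.card (∀ i : {j : ι // j ∈ S}, d i.1) : ℂ) *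
          (Fintype.card (∀ i : {j : ι // ¬ j ∈ S}, d i.1) : ℂ) := by
      rw [← Nat.cast_mul]
      congr 1
      rw [← Fintype.card_prod]
      exact Fintype.card_congr e
    have hβne : (Fintype.card (∀ i : {j : ι // ¬ j ∈ S}, d i.1) : ℂ) ≠ 0 := by
      exact_mod_cast Fintype.card_ne_zero (α := ∀ i : {j : ι // ¬ j ∈ S}, d i.1)
    rw [f4, mul_inv, mul_assoc, ← mul_assoc (Fintype.card (∀ i : {j : ι // ¬ j ∈ S}, d i.1) : ℂ)⁻¹,
      inv_mul_cancel₀ hβne, one_mul]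
  · rw [if_neg (fun hc => haa (f1.mp hc)), if_neg haa]

lemma condExp_opNorm (S : Finset ι) (A : Matrix (∀ j, d j) (∀ j, d j) ℂ) :
    opNorm (condExp S A) ≤ opNorm A := by
  haveI hα : Nonempty (∀ i : {j : ι // j ∈ S}, d i.1) :=
    ⟨fun i => Classical.arbitrary (∀ j, d j) i.1⟩
  set e := Equiv.piEquivPiSubtypeProd (fun j => j ∈ S) d with he
  calc opNorm (condExp S A)
      = opNorm (Matrix.reindex e e (condExp S A)) := (opNorm_reindex e _).symm
    _ = opNorm (bcond (Matrix.reindex e e A)) := by rw [he, reindex_condExp]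
    _ ≤ opNorm (Matrix.reindex e e A) := bcond_opNorm _
    _ = opNorm A := opNorm_reindex e A

lemma telescope (H : Matrix (∀ j, d j) (∀ j, d j) ℂ) (S : Finset ι) :
    opNorm (H - condExp S H) ≤ ∑ i ∈ S, opNorm (H - condExp {i} H) := by
  induction S using Finset.induction_on with
  | empty => rw [condExp_empty, sub_self, Finset.sum_empty, opNorm_zero]
  | @insert i S hi ih =>
    have hdis : Disjoint S {i} := by simp [Finset.disjoint_singleton_right, hi]
    have hin : insert i S = S ∪ {i} := by
      rw [Finset.union_comm, ← Finset.insert_eq]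
    rw [hin, ← condExp_union hdis H]
    have split : H - condExp S (condExp {i} H)
        = (H - condExp S H) + condExp S (H - condExp {i} H) := by
      rw [condExp_sub]
      abel
    rw [split]
    calc opNorm ((H - condExp S H) + condExp S (H - condExp {i} H))
        ≤ opNorm (H - condExp S H) + opNorm (condExp S (H - condExp {i} H)) :=
          opNorm_add_le _ _
      _ ≤ (∑ j ∈ S, opNorm (H - condExp {j} H)) + opNorm (H - condExp {i} H) :=
          add_le_add ih (condExp_opNorm S _)
      _ = ∑ j ∈ S ∪ {i}, opNorm (H - condExp {j} H) := by
          rw [← hin, Finset.sum_insert hi, add_comm]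

lemma trace_condExp_mul (J : Finset ι) (H X : Matrix (∀ j, d j) (∀ j, d j) ℂ)
    (hX : ptraceSet J X = 0) : Matrix.trace (condExp J H * X) = 0 := by
  set e := Equiv.piEquivPiSubtypeProd (fun j => j ∈ J) d with he
  have h0 : Matrix.trace (condExp J H * X) = ∑ x, ∑ y, condExp J H x y * X y x := by
    simp [Matrix.trace, Matrix.diag, Matrix.mul_apply]
  have hE : ∀ p q, condExp J H (e.symm p) (e.symm q)
      = bcond (Matrix.reindex e e H) p q := by
    intro p q
    calc condExp J H (e.symm p) (e.symm q)
        = Matrix.reindex e e (condExp J H) p q := by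
          simp [Matrix.reindex_apply, Matrix.submatrix_apply]
      _ = bcond (Matrix.reindex e e H) p q := by rw [he, reindex_condExp]
  have hbb : ∀ (b b' : ∀ i : {j : ι // ¬ j ∈ J}, d i.1),
      ∑ a : ∀ i : {j : ι // j ∈ J}, d i.1,
        (Matrix.reindex e e X) (a, b') (a, b) = 0 := by
    intro b b'
    have hcalc : ∑ a : ∀ i : {j : ι // j ∈ J}, d i.1,
        (Matrix.reindex e e X) (a, b') (a, b) = ptraceSet J X b' b := by
      simp only [Matrix.reindex_apply, Matrix.submatrix_apply]
      rw [ptraceSet]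
      refine Finset.sum_congr rfl fun z _ => ?_
      have hm1 : e.symm (z, b')
          = fun j => if h : j ∈ J then z ⟨j, h⟩ else b' ⟨j, h⟩ := by
        funext j
        by_cases hj : j ∈ J <;> simp [he, Equiv.piEquivPiSubtypeProd, hj]
      have hm2 : e.symm (z, b)
          = fun j => if h : j ∈ J then z ⟨j, h⟩ else b ⟨j, h⟩ := by
        funext j
        by_cases hj : j ∈ J <;> simp [he, Equiv.piEquivPiSubtypeProd, hj]
      rw [hm1, hm2]
    rw [hcalc, hX]
    simp
  rw [h0]
  calc (∑ x, ∑ y, condExp J H x y * X y x)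
      = ∑ p : _ × _, ∑ q : _ × _,
          condExp J H (e.symm p) (e.symm q) * X (e.symm q) (e.symm p) := by
        rw [← Equiv.sum_comp e.symm (fun x => ∑ y, condExp J H x y * X y x)]
        exact Finset.sum_congr rfl fun p _ =>
          (Equiv.sum_comp e.symm (fun y => condExp J H (e.symm p) y * X y (e.symm p))).symm
    _ = ∑ p : _ × _, ∑ q : _ × _,
          bcond (Matrix.reindex e e H) p q * (Matrix.reindex e e X) q p := by
        refine Finset.sum_congr rfl fun p _ => Finset.sum_congr rfl fun q _ => ?_
        rw [hE]
        simp [Matrix.reindex_apply, Matrix.submatrix_apply]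
    _ = 0 := bcond_trace_zero _ _ hbb

end Multipartite
end Paper

namespace Paper

/-- If `X` is a traceless self-adjoint operator on a multipartite Hilbert space such that the
partial trace of `X` over a subset `J` of the sites vanishes, then
`‖X‖_{W₁} ≤ |J|·‖X‖₁`. -/
theorem stmt8 {ι : Type*} [Fintype ι] [DecidableEq ι] [Nonempty ι] {d : ι → Type*}
    [∀ i, Fintype (d i)] [∀ i, DecidableEq (d i)]
    (X : Matrix (∀ j, d j) (∀ j, d j) ℂ) (hX : X.IsHermitian) (htr : X.trace = 0)
    (J : Finset ι) (hJ : ptraceSet J X = 0) :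
    w1Norm X ≤ (J.card : ℝ) * traceNorm X := by
  have hRHS : 0 ≤ (J.card : ℝ) * traceNorm X :=
    mul_nonneg (Nat.cast_nonneg _) (traceNorm_nonneg X)
  rw [w1Norm]
  apply Real.sSup_le _ hRHS
  rintro r ⟨H, hH, hLip, rfl⟩
  by_cases hne : Nonempty (∀ j, d j)
  · haveI := hne
    have hvan : Matrix.trace (condExp J H * X) = 0 := trace_condExp_mul J H X hJ
    have hsite : ∀ i : ι,
        (⨅ M' : Matrix (∀ j : {j : ι // j ≠ i}, d j.1) (∀ j : {j : ι // j ≠ i}, d j.1) ℂ,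
          opNorm (H - embedAt i M')) ≤ 1 / 2 := by
      intro i
      have h2 : (⨆ i : ι,
          ⨅ M' : Matrix (∀ j : {j : ι // j ≠ i}, d j.1) (∀ j : {j : ι // j ≠ i}, d j.1) ℂ,
          opNorm (H - embedAt i M')) ≤ 1 / 2 := by
        simp only [lipNorm] at hLip
        linarith
      refine le_trans ?_ h2
      exact le_ciSup (f := fun i : ι =>
        ⨅ M' : Matrix (∀ j : {j : ι // j ≠ i}, d j.1) (∀ j : {j : ι // j ≠ i}, d j.1) ℂ,
          opNorm (H - embedAt i M'))
        (Set.Finite.bddAbove (Set.finite_range _)) i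
    have hmain : ∀ ε : ℝ, 0 < ε →
        (Matrix.trace (H * X)).re ≤ (J.card : ℝ) * (1 + 2 * ε) * traceNorm X := by
      intro ε hε
      have hsitebd : ∀ i : ι, opNorm (H - condExp {i} H) ≤ 1 + 2 * ε := by
        intro i
        have hlt : (⨅ M' : Matrix (∀ j : {j : ι // j ≠ i}, d j.1)
            (∀ j : {j : ι // j ≠ i}, d j.1) ℂ, opNorm (H - embedAt i M')) < 1 / 2 + ε :=
          lt_of_le_of_lt (hsite i) (by linarith)
        obtain ⟨M', hM'⟩ := exists_lt_of_ciInf_lt hlt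
        have hdecomp : H - condExp {i} H
            = (H - embedAt i M') - condExp {i} (H - embedAt i M') := by
          rw [condExp_sub, condExp_embedAt]
          abel
        rw [hdecomp]
        calc opNorm ((H - embedAt i M') - condExp {i} (H - embedAt i M'))
            ≤ opNorm (H - embedAt i M') + opNorm (condExp {i} (H - embedAt i M')) :=
              opNorm_sub_le _ _
          _ ≤ opNorm (H - embedAt i M') + opNorm (H - embedAt i M') :=
              add_le_add le_rfl (condExp_opNorm _ _)
          _ ≤ 1 + 2 * ε := by linarith
      have htel : opNorm (H - condExp J H) ≤ (J.card : ℝ) * (1 + 2 * ε) := by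
        refine (telescope H J).trans ?_
        calc ∑ i ∈ J, opNorm (H - condExp {i} H) ≤ ∑ _i ∈ J, (1 + 2 * ε) :=
            Finset.sum_le_sum fun i _ => hsitebd i
          _ = (J.card : ℝ) * (1 + 2 * ε) := by rw [Finset.sum_const, nsmul_eq_mul]
      have heq : (Matrix.trace (H * X)).re = (Matrix.trace ((H - condExp J H) * X)).re := by
        rw [Matrix.sub_mul, Matrix.trace_sub, hvan, sub_zero]
      rw [heq]
      calc (Matrix.trace ((H - condExp J H) * X)).re
          ≤ |(Matrix.trace ((H - condExp J H) * X)).re| := le_abs_self _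
        _ ≤ opNorm (H - condExp J H) * traceNorm X := abs_re_trace_mul_le _ X hX
        _ ≤ (J.card : ℝ) * (1 + 2 * ε) * traceNorm X :=
            mul_le_mul_of_nonneg_right htel (traceNorm_nonneg X)
    refine le_of_forall_pos_le_add fun δ hδ => ?_
    set K : ℝ := (J.card : ℝ) * traceNorm X with hK
    have hKnn : 0 ≤ K := hRHS
    set ε : ℝ := δ / (2 * (K + 1)) with hε
    have hεpos : 0 < ε := by
      apply div_pos hδ; linarith
    have h1 : 2 * ε * (K + 1) = δ := by
      rw [hε]; field_simp
    have h1' : 2 * ε * K + 2 * ε = δ := by rw [← h1]; ring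
    calc (Matrix.trace (H * X)).re
        ≤ (J.card : ℝ) * (1 + 2 * ε) * traceNorm X := hmain ε hεpos
      _ = K + 2 * ε * K := by rw [hK]; ring
      _ ≤ K + δ := by linarith
  · have hIE : IsEmpty (∀ j, d j) := not_nonempty_iff.mp hne
    have hz : Matrix.trace (H * X) = 0 := by
      haveI := hIE
      simp [Matrix.trace]
    rw [hz]
    simpa using hRHS

end Paper
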